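/- arXiv:1206.4572 — 2 statements merged into one kernel-verified Lean document; each statement's English description precedes it below -/
import Mathlib

section
/- Let a be a binary sequence of length n which is not constant and satisfies a_1 ≠ a_n. Then for every k with 1 ≤ k ≤ n−1, C̃_{k+1}(a) − 2·C̃_k(a) + C̃_{k−1}(a) = −4·R̃_k(a). -/
/-- The `k`-th periodic autocorrelation of the sequence `a` of length `n`:
`C̃_k(a) = ∑_{i=1}^{n} a_i a_{i+k}`, where `a` is extended periodically
(so `C̃_n(a) = n` for a binary sequence). -/
def perCorr (a : ℕ → ℤ) (n k : ℕ) : ℤ :=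
  ∑ i ∈ Finset.Icc 1 n, a i * a ((i + k - 1) % n + 1)

/-- The length of the p-substring `r(i,j)` of a run length encoding with `γ` runs. -/
def plen (γ i j : ℕ) : ℕ := if i < j then j - i else γ + j - i

/-- The sum of the entries of the p-substring `r(i,j)`. -/
def psum (r : ℕ → ℕ) (γ i j : ℕ) : ℕ :=
  if i < j then ∑ u ∈ Finset.Icc i (j - 1), r u
  else (∑ u ∈ Finset.Icc i γ, r u) + ∑ u ∈ Finset.Icc 1 (j - 1), r u

/-- The `k`-th component of the periodic run vector: the sum of `(-1)^{|u|}` over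
all p-substrings `u = r(i,j)` (`1 ≤ i,j ≤ γ`, `i ≠ j`) of `r` with sum `k`. -/
def runVecPer (r : ℕ → ℕ) (γ k : ℕ) : ℤ :=
  ∑ p ∈ (Finset.Icc 1 γ ×ˢ Finset.Icc 1 γ).filter
      (fun p => p.1 ≠ p.2 ∧ psum r γ p.1 p.2 = k),
    (-1 : ℤ) ^ plen γ p.1 p.2


open Finset

private lemma modfact (n z : ℕ) (hn : 0 < n) (h : z < 2*n) :
    ∃ m, z % n = m ∧ m < n ∧ (m = z ∨ m + n = z) := by
  refine ⟨z % n, rfl, Nat.mod_lt _ hn, ?_⟩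
  rcases lt_or_ge z n with h' | h'
  · left; exact Nat.mod_eq_of_lt h'
  · right
    have h2 : z % n = z - n := by
      rw [Nat.mod_eq_sub_mod h', Nat.mod_eq_of_lt (by omega)]
    omega

private lemma sig1 (n i k : ℕ) (hn : 1 ≤ n) (hi1 : 1 ≤ i) (hi2 : i ≤ n)
    (hk1 : 1 ≤ k) (hk2 : k ≤ n) :
    ((i + k - 1) % n + 1) % n + 1 = (i % n + 1 + k - 1) % n + 1 := by
  obtain ⟨A, hA, hA1, hA2⟩ := modfact n (i + k - 1) (by omega) (by omega)
  rw [hA]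
  obtain ⟨B, hB, hB1, hB2⟩ := modfact n (A + 1) (by omega) (by omega)
  rw [hB]
  obtain ⟨C, hC, hC1, hC2⟩ := modfact n i (by omega) (by omega)
  rw [hC]
  obtain ⟨E, hE, hE1, hE2⟩ := modfact n (C + 1 + k - 1) (by omega) (by omega)
  rw [hE]
  omega

private lemma sig2 (n i k : ℕ) (hn : 1 ≤ n) (hi1 : 1 ≤ i) (hi2 : i ≤ n)
    (hk1 : 1 ≤ k) (hk2 : k ≤ n) :
    (i + k - 1) % n + 1 = (i % n + 1 + (k - 1) - 1) % n + 1 := by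
  obtain ⟨A, hA, hA1, hA2⟩ := modfact n (i + k - 1) (by omega) (by omega)
  rw [hA]
  obtain ⟨C, hC, hC1, hC2⟩ := modfact n i (by omega) (by omega)
  rw [hC]
  obtain ⟨E, hE, hE1, hE2⟩ := modfact n (C + 1 + (k - 1) - 1) (by omega) (by omega)
  rw [hE]
  omega

private lemma sig3 (n i k : ℕ) (hn : 1 ≤ n) (hi1 : 1 ≤ i) (hi2 : i ≤ n)
    (hk1 : 1 ≤ k) (hk2 : k < n) :
    ((i + k - 1) % n + 1) % n + 1 = (i + (k + 1) - 1) % n + 1 := by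
  obtain ⟨A, hA, hA1, hA2⟩ := modfact n (i + k - 1) (by omega) (by omega)
  rw [hA]
  obtain ⟨B, hB, hB1, hB2⟩ := modfact n (A + 1) (by omega) (by omega)
  rw [hB]
  obtain ⟨E, hE, hE1, hE2⟩ := modfact n (i + (k + 1) - 1) (by omega) (by omega)
  rw [hE]
  omega

private lemma rot (n : ℕ) (hn : 1 ≤ n) (F : ℕ → ℤ) :
    ∑ i ∈ Finset.Icc 1 n, F (i % n + 1) = ∑ i ∈ Finset.Icc 1 n, F i := by
  apply Finset.sum_nbij' (i := fun x => x % n + 1) (j := fun m => if m = 1 then n else m - 1)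
  · intro x hx
    simp only [Finset.mem_Icc] at hx ⊢
    have := Nat.mod_lt x (show 0 < n by omega)
    omega
  · intro m hm
    simp only [Finset.mem_Icc] at hm ⊢
    split <;> omega
  · intro x hx
    simp only [Finset.mem_Icc] at hx
    obtain ⟨M, hM, hM1, hM2⟩ := modfact n x (by omega) (by omega)
    rw [hM]
    split <;> omega
  · intro m hm
    simp only [Finset.mem_Icc] at hm
    split
    · subst ‹m = 1›
      obtain ⟨M, hM, hM1, hM2⟩ := modfact n n (by omega) (by omega)
      rw [hM]; omega
    · obtain ⟨M, hM, hM1, hM2⟩ := modfact n (m - 1) (by omega) (by omega)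
      rw [hM]; omega
  · intro x hx; rfl

private lemma powpar (m l : ℕ) (h : m % 2 = l % 2) : (-1 : ℤ) ^ m = (-1 : ℤ) ^ l := by
  rcases Nat.even_or_odd m with hm | hm
  · have hl : Even l := by rw [Nat.even_iff] at hm ⊢; omega
    rw [hm.neg_one_pow, hl.neg_one_pow]
  · have hl : Odd l := by rw [Nat.odd_iff] at hm ⊢; omega
    rw [hm.neg_one_pow, hl.neg_one_pow]

private lemma neg_of_ne (x y : ℤ) (hx : x = 1 ∨ x = -1) (hy : y = 1 ∨ y = -1)
    (h : x ≠ y) : y = -x := by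
  rcases hx with rfl | rfl <;> rcases hy with rfl | rfl <;> omega

theorem stmt_18 (n γ : ℕ) (hn : 1 ≤ n) (a : ℕ → ℤ)
    (hbin : ∀ i, 1 ≤ i → i ≤ n → a i = 1 ∨ a i = -1)
    (h0 : a 0 = 0)
    (hnc : ∃ i j, 1 ≤ i ∧ i ≤ n ∧ 1 ≤ j ∧ j ≤ n ∧ a i ≠ a j)
    (h1n : a 1 ≠ a n)
    -- `I j` (for `1 ≤ j ≤ γ+1`) are the starting positions of the runs of `a`:
    (I : ℕ → ℕ) (hI1 : I 1 = 1) (hIlast : I (γ + 1) = n + 1)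
    (hImono : ∀ j, 1 ≤ j → j ≤ γ → I j < I (j + 1))
    (hchange : ∀ j, 2 ≤ j → j ≤ γ → a (I j - 1) ≠ a (I j))
    (hconst : ∀ j, 1 ≤ j → j ≤ γ → ∀ p, I j ≤ p → p < I (j + 1) → a p = a (I j))
    -- the run length encoding `r`:
    (r : ℕ → ℕ) (hr : ∀ j, 1 ≤ j → j ≤ γ → r j = I (j + 1) - I j)
    (k : ℕ) (hk1 : 1 ≤ k) (hk2 : k ≤ n - 1) :
    perCorr a n (k + 1) - 2 * perCorr a n k + perCorr a n (k - 1)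
      = -4 * runVecPer r γ k := by
  classical
  -- monotonicity of I
  have hmono : ∀ j j', 1 ≤ j → j ≤ j' → j' ≤ γ + 1 → I j ≤ I j' := by
    intro j j' hj hjj'
    induction j', hjj' using Nat.le_induction with
    | base => intro _; exact le_rfl
    | succ m hm ih =>
      intro hm1
      exact le_trans (ih (by omega)) (le_of_lt (hImono m (by omega) (by omega)))
  have hmono' : ∀ j j', 1 ≤ j → j < j' → j' ≤ γ + 1 → I j < I j' := by
    intro j j' hj hjj' hj'
    exact lt_of_lt_of_le (hImono j hj (by omega)) (hmono (j + 1) j' (by omega) (by omega) hj')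
  have hγ1 : 1 ≤ γ := by
    by_contra h
    have : γ = 0 := by omega
    subst this
    rw [hI1] at hIlast
    omega
  -- existence of the run containing a position
  have hrun : ∀ p, 1 ≤ p → p ≤ n → ∃ j, 1 ≤ j ∧ j ≤ γ ∧ I j ≤ p ∧ p < I (j + 1) := by
    intro p hp1 hp2
    have hP : I 1 ≤ p := by rw [hI1]; exact hp1
    have h1 : I (Nat.findGreatest (fun j => I j ≤ p) γ) ≤ p :=
      Nat.findGreatest_spec (P := fun j => I j ≤ p) (m := 1) hγ1 hP
    have h2 : 1 ≤ Nat.findGreatest (fun j => I j ≤ p) γ :=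
      Nat.le_findGreatest (P := fun j => I j ≤ p) hγ1 hP
    have h3 : Nat.findGreatest (fun j => I j ≤ p) γ ≤ γ :=
      Nat.findGreatest_le (P := fun j => I j ≤ p) γ
    refine ⟨_, h2, h3, h1, ?_⟩
    rcases eq_or_lt_of_le h3 with he | hlt
    · rw [he, hIlast]; omega
    · by_contra hcon
      have hgr := Nat.findGreatest_is_greatest (P := fun j => I j ≤ p)
        (k := Nat.findGreatest (fun j => I j ≤ p) γ + 1) (n := γ) (Nat.lt_succ_self _) (by omega)
      exact hgr (by omega)
  -- alternation of signs at run starts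
  have halt : ∀ j, 1 ≤ j → j ≤ γ → a (I j) = (-1 : ℤ) ^ (j - 1) * a 1 := by
    intro j hj1
    induction j, hj1 using Nat.le_induction with
    | base => intro _; rw [hI1]; norm_num
    | succ m hm ih =>
      intro hle
      have hmγ : m ≤ γ := by omega
      have h1 : I m < I (m + 1) := hImono m hm hmγ
      have h2 : I (m + 1) ≤ n := by
        have := hmono' (m + 1) (γ + 1) (by omega) (by omega) le_rfl
        omega
      have h4 : 1 ≤ I m := by have := hmono 1 m le_rfl hm (by omega); omega
      have hpe : a (I (m + 1) - 1) = a (I m) :=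
        hconst m hm hmγ (I (m + 1) - 1) (by omega) (by omega)
      have hne := hchange (m + 1) (by omega) hle
      rw [hpe] at hne
      have hb1 := hbin (I m) h4 (by omega)
      have hb2 := hbin (I (m + 1)) (by omega) h2
      have hneg : a (I (m + 1)) = - a (I m) := neg_of_ne _ _ hb1 hb2 hne
      rw [hneg, ih hmγ]
      have hst : m + 1 - 1 = (m - 1) + 1 := by omega
      rw [hst, pow_succ]
      ring
  -- γ is even
  have hIγn : I γ ≤ n := by
    have := hmono' γ (γ + 1) hγ1 (by omega) le_rfl
    omega
  have hIγ1 : 1 ≤ I γ := by have := hmono 1 γ le_rfl hγ1 (by omega); omega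
  have han : a n = a (I γ) := hconst γ hγ1 le_rfl n hIγn (by rw [hIlast]; omega)
  have hγeven : γ % 2 = 0 := by
    by_contra hodd
    have heven : Even (γ - 1) := by rw [Nat.even_iff]; omega
    have : a n = a 1 := by
      rw [han, halt γ hγ1 le_rfl, heven.neg_one_pow, one_mul]
    exact h1n this.symm
  set D : ℕ → ℤ := fun x => a (x % n + 1) - a x with hD
  set e : ℕ → ℕ := fun j => I (j + 1) - 1 with he
  set w : ℕ → ℕ := fun j => if j < γ then j + 1 else 1 with hw
  -- basic facts about e
  have hebounds : ∀ j, 1 ≤ j → j ≤ γ → 1 ≤ e j ∧ e j ≤ n ∧ 2 ≤ I (j + 1) ∧ I (j + 1) ≤ n + 1 := by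
    intro j hj1 hj2
    have h1 : 1 < I (j + 1) := by have := hmono' 1 (j + 1) le_rfl (by omega) (by omega); omega
    have h2 : I (j + 1) ≤ n + 1 := by
      have := hmono (j + 1) (γ + 1) (by omega) (by omega) le_rfl; omega
    simp only [he]
    omega
  have heinj : ∀ x, 1 ≤ x → x ≤ γ → ∀ y, 1 ≤ y → y ≤ γ → e x = e y → x = y := by
    intro x hx1 hx2 y hy1 hy2 hxy
    simp only [he] at hxy
    rcases lt_trichotomy x y with h | h | h
    · have := hmono' (x + 1) (y + 1) (by omega) (by omega) (by omega)
      have := (hebounds x hx1 hx2).2.2.1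
      omega
    · exact h
    · have := hmono' (y + 1) (x + 1) (by omega) (by omega) (by omega)
      have := (hebounds y hy1 hy2).2.2.1
      omega
  -- vanishing of D off the boundary set
  have hDzero : ∀ x, 1 ≤ x → x ≤ n → (∀ j, 1 ≤ j → j ≤ γ → e j ≠ x) → D x = 0 := by
    intro x hx1 hx2 hne
    rcases eq_or_lt_of_le hx2 with heq | hlt
    · exfalso
      apply hne γ hγ1 le_rfl
      simp only [he]
      omega
    · simp only [hD]
      have hxm : x % n = x := Nat.mod_eq_of_lt hlt
      rw [hxm]
      obtain ⟨j, hj1, hj2, hj3, hj4⟩ := hrun x hx1 hx2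
      have hxe := hne j hj1 hj2
      simp only [he] at hxe
      have h5 : x + 1 < I (j + 1) := by omega
      have e1 : a x = a (I j) := hconst j hj1 hj2 x hj3 hj4
      have e2 : a (x + 1) = a (I j) := hconst j hj1 hj2 (x + 1) (by omega) h5
      rw [e1, e2, sub_self]
  -- value of D at boundaries
  have hDe : ∀ j, 1 ≤ j → j ≤ γ → D (e j) = -2 * a (I j) := by
    intro j hj1 hj2
    obtain ⟨hb1, hb2, hb3, hb4⟩ := hebounds j hj1 hj2
    have hlt : I j < I (j + 1) := hImono j hj1 hj2
    have hIj1 : 1 ≤ I j := by have := hmono 1 j le_rfl hj1 (by omega); omega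
    have hIjn : I j ≤ n := by omega
    have hae : a (I (j + 1) - 1) = a (I j) := hconst j hj1 hj2 (I (j + 1) - 1) (by omega) (by omega)
    simp only [hD, he]
    rcases eq_or_lt_of_le hj2 with heq | hjγ
    · subst heq
      have hx : I (j + 1) - 1 = n := by omega
      rw [hx, Nat.mod_self]
      rw [han, show (0 : ℕ) + 1 = 1 from rfl]
      have hb := hbin (I j) hIj1 hIjn
      have hb1' := hbin 1 le_rfl hn
      rw [han] at h1n
      have := neg_of_ne _ _ hb hb1' (fun hh => h1n hh.symm)
      rw [this]; ring
    · have hub2 : I (j + 1) < n + 1 := by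
        rw [← hIlast]; exact hmono' (j + 1) (γ + 1) (by omega) (by omega) le_rfl
      have hmm : (I (j + 1) - 1) % n = I (j + 1) - 1 := Nat.mod_eq_of_lt (by omega)
      rw [hmm]
      have hsucc : I (j + 1) - 1 + 1 = I (j + 1) := by omega
      rw [hsucc, hae]
      have hne := hchange (j + 1) (by omega) (by omega)
      rw [hae] at hne
      have hbj := hbin (I j) hIj1 hIjn
      have hbj1 := hbin (I (j + 1)) (by omega) (by omega)
      rw [neg_of_ne _ _ hbj hbj1 hne]
      ring
  -- product of two boundary D-values
  have hIprod : ∀ x, 1 ≤ x → x ≤ γ → ∀ y, 1 ≤ y → y ≤ γ →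
      a (I x) * a (I y) = (-1 : ℤ) ^ (x + y) := by
    intro x hx1 hx2 y hy1 hy2
    rw [halt x hx1 hx2, halt y hy1 hy2]
    have ha1 : a 1 * a 1 = 1 := by
      rcases hbin 1 le_rfl hn with h | h <;> rw [h] <;> norm_num
    have hxy : x + y = (x - 1) + (y - 1) + 2 := by omega
    rw [hxy, pow_add, pow_add]
    linear_combination ((-1 : ℤ) ^ (x - 1) * (-1 : ℤ) ^ (y - 1)) * ha1
  have hprodD : ∀ x, 1 ≤ x → x ≤ γ → ∀ y, 1 ≤ y → y ≤ γ →
      D (e x) * D (e y) = 4 * (-1 : ℤ) ^ (x + y) := by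
    intro x hx1 hx2 y hy1 hy2
    rw [hDe x hx1 hx2, hDe y hy1 hy2]
    have := hIprod x hx1 hx2 y hy1 hy2
    linear_combination 4 * this
  -- telescoping sums of run lengths
  have tele : ∀ i', 1 ≤ i' → ∀ j', i' ≤ j' → j' ≤ γ + 1 →
      I i' + ∑ u ∈ Finset.Icc i' (j' - 1), r u = I j' := by
    intro i' hi' j' hij
    induction j', hij using Nat.le_induction with
    | base =>
      intro _
      rw [Finset.Icc_eq_empty (by omega), Finset.sum_empty]
      omega
    | succ m hm ih =>
      intro hm1
      have hmγ : m ≤ γ := by omega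
      have hIm : I m < I (m + 1) := hImono m (by omega) hmγ
      have hstep : m + 1 - 1 = (m - 1) + 1 := by omega
      rw [hstep, Finset.sum_Icc_succ_top (by omega : i' ≤ m - 1 + 1)]
      have hmm : m - 1 + 1 = m := by omega
      rw [hmm]
      have ihh := ih (by omega)
      rw [hr m (by omega) hmγ]
      omega
  -- values of psum
  have hpsum : ∀ x, 1 ≤ x → x ≤ γ → ∀ y, 1 ≤ y → y ≤ γ →
      (x < y → I x + psum r γ x y = I y) ∧ (y < x → I x + psum r γ x y = n + I y) := by
    intro x hx1 hx2 y hy1 hy2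
    constructor
    · intro hlt
      rw [psum, if_pos hlt]
      exact tele x hx1 y (by omega) (by omega)
    · intro hlt
      rw [psum, if_neg (by omega)]
      have t1 : I x + ∑ u ∈ Finset.Icc x γ, r u = I (γ + 1) := by
        have := tele x hx1 (γ + 1) (by omega) (by omega)
        simpa using this
      have t2 : I 1 + ∑ u ∈ Finset.Icc 1 (y - 1), r u = I y := tele 1 le_rfl y (by omega) (by omega)
      rw [hI1] at t2
      rw [hIlast] at t1
      omega
  -- the main pointwise identity
  have hmain : ∀ i, 1 ≤ i → i ≤ γ → ∀ j, 1 ≤ j → j ≤ γ →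
      (if e j = (e i + k - 1) % n + 1 then D (e i) * D (e j) else 0)
        = (if w i ≠ w j ∧ psum r γ (w i) (w j) = k
            then 4 * (-1 : ℤ) ^ plen γ (w i) (w j) else 0) := by
    intro i hi1 hi2 j hj1 hj2
    obtain ⟨hei1, hei2, hei3, hei4⟩ := hebounds i hi1 hi2
    obtain ⟨hej1, hej2, hej3, hej4⟩ := hebounds j hj1 hj2
    have hwi : (i < γ ∧ w i = i + 1 ∧ I (w i) = I (i + 1) ∧ I (i + 1) ≤ n) ∨
        (i = γ ∧ w i = 1 ∧ I (w i) = 1 ∧ I (i + 1) = n + 1) := by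
      rcases lt_or_eq_of_le hi2 with h | h
      · left
        have hwv : w i = i + 1 := by simp only [hw]; rw [if_pos h]
        have hub : I (i + 1) < n + 1 := by
          have := hmono' (i + 1) (γ + 1) (by omega) (by omega) le_rfl; omega
        exact ⟨h, hwv, by rw [hwv], by omega⟩
      · right
        have hwv : w i = 1 := by simp only [hw]; rw [if_neg (by omega)]
        exact ⟨h, hwv, by rw [hwv, hI1], by rw [h, hIlast]⟩
    have hwj : (j < γ ∧ w j = j + 1 ∧ I (w j) = I (j + 1) ∧ I (j + 1) ≤ n) ∨
        (j = γ ∧ w j = 1 ∧ I (w j) = 1 ∧ I (j + 1) = n + 1) := by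
      rcases lt_or_eq_of_le hj2 with h | h
      · left
        have hwv : w j = j + 1 := by simp only [hw]; rw [if_pos h]
        have hub : I (j + 1) < n + 1 := by
          have := hmono' (j + 1) (γ + 1) (by omega) (by omega) le_rfl; omega
        exact ⟨h, hwv, by rw [hwv], by omega⟩
      · right
        have hwv : w j = 1 := by simp only [hw]; rw [if_neg (by omega)]
        exact ⟨h, hwv, by rw [hwv, hI1], by rw [h, hIlast]⟩
    have hwib : 1 ≤ w i ∧ w i ≤ γ := by omega
    have hwjb : 1 ≤ w j ∧ w j ≤ γ := by omega
    have hP := hpsum (w i) hwib.1 hwib.2 (w j) hwjb.1 hwjb.2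
    have hord1 : i < j → I (i + 1) < I (j + 1) := fun h =>
      hmono' (i + 1) (j + 1) (by omega) (by omega) (by omega)
    have hord2 : j < i → I (j + 1) < I (i + 1) := fun h =>
      hmono' (j + 1) (i + 1) (by omega) (by omega) (by omega)
    have hord3 : i = j → I (i + 1) = I (j + 1) ∧ w i = w j := by
      intro h; subst h; exact ⟨rfl, rfl⟩
    have hcond : (e j = (e i + k - 1) % n + 1) ↔ (w i ≠ w j ∧ psum r γ (w i) (w j) = k) := by
      simp only [he]
      obtain ⟨M, hM, hM1, hM2⟩ := modfact n (I (i + 1) - 1 + k - 1) (by omega) (by omega)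
      rw [hM]
      obtain ⟨hP1, hP2⟩ := hP
      omega
    rw [if_congr hcond rfl rfl]
    by_cases hC : w i ≠ w j ∧ psum r γ (w i) (w j) = k
    · rw [if_pos hC, if_pos hC, hprodD i hi1 hi2 j hj1 hj2]
      congr 1
      apply powpar
      have hplen : plen γ (w i) (w j) = if w i < w j then w j - w i else γ + w j - w i := rfl
      rw [hplen]
      have hC1 := hC.1
      split <;> omega
    · rw [if_neg hC, if_neg hC]
  -- Step 1: the second-difference identity
  have key1 : perCorr a n (k + 1) - 2 * perCorr a n k + perCorr a n (k - 1)
      = -∑ i ∈ Finset.Icc 1 n, D i * D ((i + k - 1) % n + 1) := by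
    have hkn : k ≤ n := by omega
    have hkn' : k < n := by omega
    have hsplit : ∑ i ∈ Finset.Icc 1 n, D i * D ((i + k - 1) % n + 1)
        = ∑ i ∈ Finset.Icc 1 n,
            (a (i % n + 1) * a ((i % n + 1 + k - 1) % n + 1)
              - a (i % n + 1) * a ((i % n + 1 + (k - 1) - 1) % n + 1)
              - a i * a ((i + (k + 1) - 1) % n + 1)
              + a i * a ((i + k - 1) % n + 1)) := by
      apply Finset.sum_congr rfl
      intro i hi
      simp only [Finset.mem_Icc] at hi
      simp only [hD]
      rw [← sig1 n i k hn hi.1 hi.2 hk1 hkn, ← sig2 n i k hn hi.1 hi.2 hk1 hkn,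
        ← sig3 n i k hn hi.1 hi.2 hk1 hkn']
      ring
    rw [hsplit, Finset.sum_add_distrib, Finset.sum_sub_distrib, Finset.sum_sub_distrib]
    have t1 : ∑ i ∈ Finset.Icc 1 n, a (i % n + 1) * a ((i % n + 1 + k - 1) % n + 1)
        = perCorr a n k := rot n hn (fun x => a x * a ((x + k - 1) % n + 1))
    have t2 : ∑ i ∈ Finset.Icc 1 n, a (i % n + 1) * a ((i % n + 1 + (k - 1) - 1) % n + 1)
        = perCorr a n (k - 1) := rot n hn (fun x => a x * a ((x + (k - 1) - 1) % n + 1))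
    have t3 : ∑ i ∈ Finset.Icc 1 n, a i * a ((i + (k + 1) - 1) % n + 1)
        = perCorr a n (k + 1) := rfl
    have t4 : ∑ i ∈ Finset.Icc 1 n, a i * a ((i + k - 1) % n + 1) = perCorr a n k := rfl
    rw [t1, t2, t3, t4]
    ring
  -- Step 2: restrict to boundaries
  have key2 : ∑ i ∈ Finset.Icc 1 n, D i * D ((i + k - 1) % n + 1)
      = ∑ j ∈ Finset.Icc 1 γ, D (e j) * D ((e j + k - 1) % n + 1) := by
    have himg : ∑ x ∈ (Finset.Icc 1 γ).image e, D x * D ((x + k - 1) % n + 1)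
        = ∑ j ∈ Finset.Icc 1 γ, D (e j) * D ((e j + k - 1) % n + 1) := by
      apply Finset.sum_image
      intro x hx y hy hxy
      simp only [Finset.mem_coe, Finset.mem_Icc] at hx hy
      exact heinj x hx.1 hx.2 y hy.1 hy.2 hxy
    rw [← himg]
    apply (Finset.sum_subset ?_ ?_).symm
    · intro x hx
      simp only [Finset.mem_image, Finset.mem_Icc] at hx ⊢
      obtain ⟨j, hj, rfl⟩ := hx
      have := hebounds j hj.1 hj.2
      omega
    · intro x hx hnx
      simp only [Finset.mem_Icc] at hx
      simp only [Finset.mem_image, Finset.mem_Icc, not_exists] at hnx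
      have hzero : D x = 0 := by
        apply hDzero x hx.1 hx.2
        intro j hj1 hj2
        exact fun hh => hnx j ⟨⟨hj1, hj2⟩, hh⟩
      rw [hzero, zero_mul]
  -- Step 3: identify the shifted boundary
  have key3 : ∀ j ∈ Finset.Icc 1 γ,
      D (e j) * D ((e j + k - 1) % n + 1)
        = ∑ j' ∈ Finset.Icc 1 γ,
            (if e j' = (e j + k - 1) % n + 1 then D (e j) * D (e j') else 0) := by
    intro j hj
    simp only [Finset.mem_Icc] at hj
    have htb : (e j + k - 1) % n < n := Nat.mod_lt _ (by omega)
    by_cases hex : ∃ j' ∈ Finset.Icc 1 γ, e j' = (e j + k - 1) % n + 1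
    · obtain ⟨j', hj'm, hj'e⟩ := hex
      simp only [Finset.mem_Icc] at hj'm
      have hfil : (Finset.Icc 1 γ).filter (fun j' => e j' = (e j + k - 1) % n + 1) = {j'} := by
        ext x
        simp only [Finset.mem_filter, Finset.mem_singleton, Finset.mem_Icc]
        constructor
        · rintro ⟨⟨hx1, hx2⟩, hxe⟩
          exact heinj x hx1 hx2 j' hj'm.1 hj'm.2 (hxe.trans hj'e.symm)
        · rintro rfl
          exact ⟨hj'm, hj'e⟩
      rw [← Finset.sum_filter, hfil, Finset.sum_singleton, hj'e]
    · push_neg at hex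
      have h0 : D ((e j + k - 1) % n + 1) = 0 := by
        apply hDzero _ (by omega) (by omega)
        intro j'' h1 h2
        exact hex j'' (Finset.mem_Icc.mpr ⟨h1, h2⟩)
      rw [h0, mul_zero]
      symm
      apply Finset.sum_eq_zero
      intro x hx
      rw [if_neg (hex x hx)]
  -- Step 4: reindex as a sum over pairs and compare with runVecPer
  have key4 : ∑ j ∈ Finset.Icc 1 γ, ∑ j' ∈ Finset.Icc 1 γ,
      (if e j' = (e j + k - 1) % n + 1 then D (e j) * D (e j') else 0)
      = 4 * runVecPer r γ k := by
    rw [← Finset.sum_product']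
    rw [runVecPer, Finset.mul_sum, Finset.sum_filter]
    apply Finset.sum_nbij' (i := fun p => (w p.1, w p.2)) (j := fun p =>
      ((if p.1 = 1 then γ else p.1 - 1), (if p.2 = 1 then γ else p.2 - 1)))
    · rintro ⟨x, y⟩ hp
      simp only [Finset.mem_product, Finset.mem_Icc, hw] at hp ⊢
      constructor <;> (repeat' split) <;> omega
    · rintro ⟨x, y⟩ hp
      simp only [Finset.mem_product, Finset.mem_Icc] at hp ⊢
      constructor <;> (repeat' split) <;> omega
    · rintro ⟨x, y⟩ hp
      simp only [Finset.mem_product, Finset.mem_Icc] at hp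
      simp only [hw, Prod.mk.injEq]
      constructor <;> (repeat' split) <;> omega
    · rintro ⟨x, y⟩ hp
      simp only [Finset.mem_product, Finset.mem_Icc] at hp
      simp only [hw, Prod.mk.injEq]
      constructor <;> (repeat' split) <;> omega
    · rintro ⟨x, y⟩ hp
      simp only [Finset.mem_product, Finset.mem_Icc] at hp
      exact hmain x hp.1.1 hp.1.2 y hp.2.1 hp.2.2
  rw [key1, key2, Finset.sum_congr rfl key3, key4]
  ring
end

section
/- Let a be a binary sequence of length n which is not constant and satisfies a_1 ≠ a_n, with γ runs. Then for every k with 0 ≤ k ≤ n, C̃_k(a) = n − 2γk − 4·Σ_{j=1}^{k−1} (k−j)·R̃_j(a). -/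
theorem stmt_19 (n γ : ℕ) (hn : 1 ≤ n) (a : ℕ → ℤ)
    (hbin : ∀ i, 1 ≤ i → i ≤ n → a i = 1 ∨ a i = -1)
    (h0 : a 0 = 0)
    (hnc : ∃ i j, 1 ≤ i ∧ i ≤ n ∧ 1 ≤ j ∧ j ≤ n ∧ a i ≠ a j)
    (h1n : a 1 ≠ a n)
    -- `I j` (for `1 ≤ j ≤ γ+1`) are the starting positions of the runs of `a`:
    (I : ℕ → ℕ) (hI1 : I 1 = 1) (hIlast : I (γ + 1) = n + 1)
    (hImono : ∀ j, 1 ≤ j → j ≤ γ → I j < I (j + 1))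
    (hchange : ∀ j, 2 ≤ j → j ≤ γ → a (I j - 1) ≠ a (I j))
    (hconst : ∀ j, 1 ≤ j → j ≤ γ → ∀ p, I j ≤ p → p < I (j + 1) → a p = a (I j))
    -- the run length encoding `r`:
    (r : ℕ → ℕ) (hr : ∀ j, 1 ≤ j → j ≤ γ → r j = I (j + 1) - I j)
    (k : ℕ) (hk : k ≤ n) :
    perCorr a n k = (n : ℤ) - 2 * (γ : ℤ) * k
      - 4 * ∑ j ∈ Finset.Icc 1 (k - 1), ((k : ℤ) - j) * runVecPer r γ j := by
  haveI : NeZero n := ⟨by omega⟩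
  have hγ1 : 1 ≤ γ := by
    rcases Nat.eq_zero_or_pos γ with h | h
    · subst h; rw [zero_add] at hIlast; omega
    · exact h
  have Istrict : ∀ u v, 1 ≤ u → u < v → v ≤ γ + 1 → I u < I v := by
    intro u v hu huv hv
    induction v with
    | zero => omega
    | succ w ih =>
      rcases Nat.lt_or_ge u w with h1 | h1
      · exact lt_trans (ih (by omega) (by omega)) (hImono w (by omega) (by omega))
      · have : u = w := by omega
        subst this
        exact hImono u (by omega) (by omega)
  have Imono : ∀ u v, 1 ≤ u → u ≤ v → v ≤ γ + 1 → I u ≤ I v := by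
    intro u v hu huv hv
    rcases Nat.eq_or_lt_of_le huv with h | h
    · subst h; exact le_refl _
    · exact le_of_lt (Istrict u v hu h hv)
  have hIge : ∀ u, 1 ≤ u → u ≤ γ + 1 → 1 ≤ I u := by
    intro u hu huγ
    have := Imono 1 u (by omega) hu huγ
    omega
  have hIub : ∀ u, 1 ≤ u → u ≤ γ → I u ≤ n := by
    intro u hu huγ
    have := Istrict u (γ+1) hu (by omega) (by omega)
    omega
  set J : ℕ → ℕ := fun u => I u - 1 with hJdef
  have hJ1 : J 1 = 0 := by simp [hJdef, hI1]
  have hJlast : J (γ + 1) = n := by simp [hJdef, hIlast]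
  have hJstrict : ∀ u v, 1 ≤ u → u < v → v ≤ γ + 1 → J u < J v := by
    intro u v hu huv hv
    have h1 := Istrict u v hu huv hv
    have h2 := hIge u hu (by omega)
    simp only [hJdef]; omega
  have hJmono : ∀ u v, 1 ≤ u → u ≤ v → v ≤ γ + 1 → J u ≤ J v := by
    intro u v hu huv hv
    rcases Nat.eq_or_lt_of_le huv with h | h
    · subst h; exact le_refl _
    · exact le_of_lt (hJstrict u v hu h hv)
  have hJub : ∀ u, 1 ≤ u → u ≤ γ → J u < n := by
    intro u hu huγ
    have := hJstrict u (γ+1) hu (by omega) (by omega)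
    omega
  have hcastinj : ∀ c d : ℕ, c < n → d < n → (c : ZMod n) = (d : ZMod n) → c = d := by
    intro c d hc hd h
    have h1 := ZMod.val_natCast (n := n) c
    have h2 := ZMod.val_natCast (n := n) d
    rw [h] at h1
    rw [Nat.mod_eq_of_lt hc] at h1
    rw [Nat.mod_eq_of_lt hd] at h2
    omega
  -- telescoping sums of r
  have hsum0 : ∀ u, 1 ≤ u → ∀ d, u + d ≤ γ + 1 →
      ∑ w ∈ Finset.Icc u (u + d - 1), r w = J (u + d) - J u := by
    intro u hu d
    induction d with
    | zero =>
      intro _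
      rw [Finset.Icc_eq_empty (by omega)]
      simp
    | succ e ih =>
      intro hle
      have h1 : u + (e+1) - 1 = (u + e - 1) + 1 := by omega
      rw [h1, Finset.sum_Icc_succ_top (by omega), ih (by omega)]
      have h2 : u + e - 1 + 1 = u + e := by omega
      rw [h2]
      have h3 : r (u + e) = J (u + e + 1) - J (u + e) := by
        have hh := hr (u+e) (by omega) (by omega)
        have h4 := hIge (u+e) (by omega) (by omega)
        simp only [hJdef]
        omega
      have h4 := hJmono u (u+e) hu (by omega) (by omega)
      have h5 := hJmono (u+e) (u+e+1) (by omega) (by omega) (by omega)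
      have h6 : u + e + 1 = u + (e + 1) := by omega
      rw [h3, ← h6]
      omega
  have hsum : ∀ u v, 1 ≤ u → u ≤ v → v ≤ γ + 1 →
      ∑ w ∈ Finset.Icc u (v - 1), r w = J v - J u := by
    intro u v hu huv hv
    obtain ⟨d, rfl⟩ := Nat.exists_eq_add_of_le huv
    exact hsum0 u hu d (by omega)
  have hpsum_eq : ∀ u v, 1 ≤ u → u ≤ γ → 1 ≤ v → v ≤ γ → u ≠ v →
      psum r γ u v = if u < v then J v - J u else n - J u + J v := by
    intro u v hu huγ hv hvγ huv
    unfold psum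
    by_cases h : u < v
    · rw [if_pos h, if_pos h]
      exact hsum u v hu (le_of_lt h) (by omega)
    · rw [if_neg h, if_neg h]
      have e1 : ∑ w ∈ Finset.Icc u γ, r w = n - J u := by
        have := hsum u (γ+1) hu (by omega) (by omega)
        simpa [hJlast] using this
      have e2 : ∑ w ∈ Finset.Icc 1 (v-1), r w = J v := by
        have := hsum 1 v (le_refl 1) hv (by omega)
        simpa [hJ1] using this
      rw [e1, e2]
  have hpsum_lb : ∀ u v, 1 ≤ u → u ≤ γ → 1 ≤ v → v ≤ γ → u ≠ v →
      1 ≤ psum r γ u v := by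
    intro u v hu huγ hv hvγ huv
    rw [hpsum_eq u v hu huγ hv hvγ huv]
    have h1 := hJub u hu huγ
    by_cases h : u < v
    · rw [if_pos h]
      have := hJstrict u v hu h (by omega)
      omega
    · rw [if_neg h]
      omega
  have hpsum_ub : ∀ u v, 1 ≤ u → u ≤ γ → 1 ≤ v → v ≤ γ → u ≠ v →
      psum r γ u v ≤ n - 1 := by
    intro u v hu huγ hv hvγ huv
    rw [hpsum_eq u v hu huγ hv hvγ huv]
    have h1 := hJub u hu huγ
    have h2 := hJub v hv hvγ
    by_cases h : u < v
    · rw [if_pos h]; omega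
    · rw [if_neg h]
      have := hJstrict v u hv (by omega) (by omega)
      omega
  have hxv : ∀ u v, 1 ≤ u → u ≤ γ → 1 ≤ v → v ≤ γ → u ≠ v →
      ((J u : ZMod n) + ((psum r γ u v : ℕ) : ZMod n)) = (J v : ZMod n) := by
    intro u v hu huγ hv hvγ huv
    rw [hpsum_eq u v hu huγ hv hvγ huv]
    by_cases h : u < v
    · rw [if_pos h]
      have hle : J u ≤ J v := le_of_lt (hJstrict u v hu h (by omega))
      rw [← Nat.cast_add, Nat.add_sub_cancel' hle]
    · rw [if_neg h]
      have h1 : J u < n := hJub u hu huγ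
      have h2 : J u + (n - J u + J v) = n + J v := by omega
      rw [← Nat.cast_add, h2, Nat.cast_add, ZMod.natCast_self, zero_add]
  have hJcastinj : ∀ u v, 1 ≤ u → u ≤ γ → 1 ≤ v → v ≤ γ →
      (J u : ZMod n) = (J v : ZMod n) → u = v := by
    intro u v hu huγ hv hvγ h
    have heq := hcastinj _ _ (hJub u hu huγ) (hJub v hv hvγ) h
    by_contra hne
    rcases Nat.lt_or_ge u v with h1 | h1
    · have := hJstrict u v hu h1 (by omega); omega
    · have := hJstrict v u hv (by omega) (by omega); omega
  have hpsuminj : ∀ u v v', 1 ≤ u → u ≤ γ → 1 ≤ v → v ≤ γ → 1 ≤ v' → v' ≤ γ →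
      u ≠ v → u ≠ v' → psum r γ u v = psum r γ u v' → v = v' := by
    intro u v v' hu huγ hv hvγ hv' hv'γ huv huv' h
    have e1 := hxv u v hu huγ hv hvγ huv
    have e2 := hxv u v' hu huγ hv' hv'γ huv'
    rw [h] at e1
    exact hJcastinj v v' hv hvγ hv' hv'γ (e1.symm.trans e2)
  have hML : ∀ u v v', 1 ≤ u → u ≤ γ → 1 ≤ v → v ≤ γ → 1 ≤ v' → v' ≤ γ →
      u ≠ v → u ≠ v' →
      (psum r γ u v' < psum r γ u v ↔ plen γ u v' < plen γ u v) := by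
    intro u v v' hu huγ hv hvγ hv' hv'γ huv huv'
    rw [hpsum_eq u v hu huγ hv hvγ huv, hpsum_eq u v' hu huγ hv' hv'γ huv']
    unfold plen
    have b1 := hJub u hu huγ
    have b2 := hJub v hv hvγ
    have b3 := hJub v' hv' hv'γ
    by_cases hA : u < v <;> by_cases hB : u < v'
    · rw [if_pos hA, if_pos hB, if_pos hA, if_pos hB]
      have s1 := hJstrict u v hu hA (by omega)
      have s2 := hJstrict u v' hu hB (by omega)
      by_cases hc : v' < v
      · have := hJstrict v' v hv' hc (by omega)
        constructor <;> intro <;> omega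
      · have := hJmono v v' hv (by omega) (by omega)
        constructor <;> intro <;> omega
    · -- u < v, v' < u : LHS false, RHS false
      rw [if_pos hA, if_neg hB, if_pos hA, if_neg hB]
      have s1 := hJstrict u v hu hA (by omega)
      constructor <;> intro <;> omega
    · -- v < u, u < v' : LHS true, RHS true
      rw [if_neg hA, if_pos hB, if_neg hA, if_pos hB]
      have s1 := hJstrict v u hv (by omega) (by omega)
      have s2 := hJstrict u v' hu hB (by omega)
      constructor <;> intro <;> omega
    · -- v < u, v' < u
      rw [if_neg hA, if_neg hB, if_neg hA, if_neg hB]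
      have s1 := hJstrict v u hv (by omega) (by omega)
      have s2 := hJstrict v' u hv' (by omega) (by omega)
      by_cases hc : v' < v
      · have := hJstrict v' v hv' hc (by omega)
        constructor <;> intro <;> omega
      · have := hJmono v v' hv (by omega) (by omega)
        constructor <;> intro <;> omega
  have hplen_pos : ∀ u v, 1 ≤ u → u ≤ γ → 1 ≤ v → v ≤ γ → u ≠ v → 1 ≤ plen γ u v := by
    intro u v hu huγ hv hvγ huv
    unfold plen
    split <;> omega
  have hplen_ub : ∀ u v, 1 ≤ u → u ≤ γ → 1 ≤ v → v ≤ γ → u ≠ v → plen γ u v ≤ γ - 1 := by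
    intro u v hu huγ hv hvγ huv
    unfold plen
    split <;> omega
  have hplen_inj : ∀ u v v', 1 ≤ u → u ≤ γ → 1 ≤ v → v ≤ γ → 1 ≤ v' → v' ≤ γ →
      u ≠ v → u ≠ v' → plen γ u v = plen γ u v' → v = v' := by
    intro u v v' hu huγ hv hvγ hv' hv'γ huv huv' h
    unfold plen at h
    by_cases hA : u < v <;> by_cases hB : u < v'
    · rw [if_pos hA, if_pos hB] at h; omega
    · rw [if_pos hA, if_neg hB] at h; omega
    · rw [if_neg hA, if_pos hB] at h; omega
    · rw [if_neg hA, if_neg hB] at h; omega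
  -- the sequence on ZMod n
  set A : ZMod n → ℤ := fun x => a (x.val + 1) with hAdef
  set S : Finset (ZMod n) := (Finset.Icc 1 γ).image (fun u => ((J u : ℕ) : ZMod n)) with hSdef
  set b : ZMod n → ℤ := fun x => A x * A (x + 1) with hbdef
  set B : ZMod n → ℕ → ℤ := fun y m => ∏ t ∈ Finset.range m, b (y + (t : ℕ)) with hBdef
  set C : ℕ → ℤ := fun m => ∑ x : ZMod n, B x m with hCdef
  set R : ℕ → ℤ := fun j => runVecPer r γ j with hRdef
  have hA : ∀ x, A x = 1 ∨ A x = -1 := by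
    intro x
    exact hbin _ (by omega) (by have := ZMod.val_lt x; omega)
  have hAA : ∀ x, A x * A x = 1 := by
    intro x
    rcases hA x with h | h <;> rw [h] <;> norm_num
  have hvalcast : ∀ x : ZMod n, ((x.val : ℕ) : ZMod n) = x := by
    intro x
    simp [ZMod.natCast_val, ZMod.cast_id]
  have hper : ∀ m : ℕ, perCorr a n m = ∑ x : ZMod n, A x * A (x + (m : ZMod n)) := by
    intro m
    unfold perCorr
    apply Finset.sum_nbij' (i := fun (p : ℕ) => ((p - 1 : ℕ) : ZMod n))
      (j := fun (x : ZMod n) => x.val + 1)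
    · intro p hp
      exact Finset.mem_univ _
    · intro x hx
      simp only [Finset.mem_Icc]
      have := ZMod.val_lt x
      omega
    · intro p hp
      simp only [Finset.mem_Icc] at hp
      have h1 : ((p - 1 : ℕ) : ZMod n).val = p - 1 := by
        rw [ZMod.val_natCast, Nat.mod_eq_of_lt (by omega)]
      omega
    · intro x hx
      simp only [Nat.add_sub_cancel]
      exact hvalcast x
    · intro p hp
      simp only [Finset.mem_Icc] at hp
      have h1 : ((p - 1 : ℕ) : ZMod n).val = p - 1 := by
        rw [ZMod.val_natCast, Nat.mod_eq_of_lt (by omega)]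
      have h2 : ((p - 1 : ℕ) : ZMod n) + (m : ZMod n) = ((p - 1 + m : ℕ) : ZMod n) := by
        push_cast; ring
      have h3 : (((p - 1 + m : ℕ) : ZMod n)).val = (p - 1 + m) % n := ZMod.val_natCast _ _
      simp only [hAdef, h1, h2, h3]
      have h4 : p - 1 + 1 = p := by omega
      have h5 : p + m - 1 = p - 1 + m := by omega
      rw [h4, h5]
  have hSmem : ∀ x : ZMod n, x ∈ S ↔ ∃ u, 1 ≤ u ∧ u ≤ γ ∧ ((J u : ℕ) : ZMod n) = x := by
    intro x
    simp only [hSdef, Finset.mem_image, Finset.mem_Icc]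
    constructor
    · rintro ⟨u, ⟨h1, h2⟩, h3⟩; exact ⟨u, h1, h2, h3⟩
    · rintro ⟨u, h1, h2, h3⟩; exact ⟨u, ⟨h1, h2⟩, h3⟩
  have hcardS : S.card = γ := by
    rw [hSdef, Finset.card_image_of_injOn, Nat.card_Icc]
    · omega
    · intro u hu v hv h
      simp only [Finset.mem_coe, Finset.mem_Icc] at hu hv
      exact hJcastinj u v hu.1 hu.2 hv.1 hv.2 h
  have hrun : ∀ p, 1 ≤ p → p ≤ n → ∃ u, 1 ≤ u ∧ u ≤ γ ∧ I u ≤ p ∧ p < I (u + 1) := by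
    intro p hp1 hpn
    set T := (Finset.Icc 1 γ).filter (fun u => I u ≤ p) with hT
    have hmem1 : (1 : ℕ) ∈ T := by
      simp only [hT, Finset.mem_filter, Finset.mem_Icc]
      exact ⟨⟨le_refl 1, hγ1⟩, by omega⟩
    have hne : T.Nonempty := ⟨1, hmem1⟩
    set u := T.max' hne with hudef
    have hu : u ∈ T := T.max'_mem hne
    simp only [hT, Finset.mem_filter, Finset.mem_Icc] at hu
    refine ⟨u, hu.1.1, hu.1.2, hu.2, ?_⟩
    by_contra hcon
    push_neg at hcon
    have hu1 : u + 1 ≤ γ := by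
      by_contra h2
      have : u = γ := by omega
      rw [this] at hcon
      omega
    have hmem2 : u + 1 ∈ T := by
      simp only [hT, Finset.mem_filter, Finset.mem_Icc]
      exact ⟨⟨by omega, hu1⟩, hcon⟩
    have := T.le_max' (u+1) hmem2
    omega
  have hSchar : ∀ x : ZMod n, (A x ≠ A (x + 1)) ↔ (x + 1) ∈ S := by
    intro x
    have hxval : x.val < n := ZMod.val_lt x
    have hx1 : x + 1 = ((x.val + 1 : ℕ) : ZMod n) := by
      rw [Nat.cast_add, Nat.cast_one, hvalcast x]
    by_cases hlast : x.val + 1 = n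
    · -- wrap-around position
      have hz : x + 1 = 0 := by rw [hx1, hlast, ZMod.natCast_self]
      have hv0 : (x + 1).val = 0 := by rw [hz]; exact ZMod.val_zero
      have hAx : A x = a n := by simp only [hAdef]; rw [hlast]
      have hAx1 : A (x + 1) = a 1 := by simp only [hAdef]; rw [hv0]
      apply iff_of_true
      · rw [hAx, hAx1]
        exact fun h => h1n h.symm
      · rw [hz, hSmem]
        exact ⟨1, le_refl 1, hγ1, by rw [hJ1, Nat.cast_zero]⟩
    · -- interior
      have hplt : x.val + 1 < n := by omega
      have hv1 : (x + 1).val = x.val + 1 := by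
        rw [hx1, ZMod.val_natCast, Nat.mod_eq_of_lt hplt]
      have hAx : A x = a (x.val + 1) := rfl
      have hAx1 : A (x + 1) = a (x.val + 1 + 1) := by simp only [hAdef]; rw [hv1]
      rw [hAx, hAx1, hSmem]
      set p := x.val + 1 with hpdef
      constructor
      · intro hne
        obtain ⟨u, hu1, huγ, hule, hult⟩ := hrun p (by omega) (by omega)
        have hIu1 : I (u + 1) = p + 1 := by
          by_contra hcon
          have hlt : p + 1 < I (u+1) := by omega
          have e1 := hconst u hu1 huγ p hule (by omega)
          have e2 := hconst u hu1 huγ (p+1) (by omega) (by omega)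
          rw [e1, ← e2] at hne
          exact hne rfl
        have hu1γ : u + 1 ≤ γ := by
          by_contra h2
          have : u + 1 = γ + 1 := by omega
          rw [this, hIlast] at hIu1
          omega
        refine ⟨u + 1, by omega, hu1γ, ?_⟩
        have : J (u+1) = x.val + 1 := by simp only [hJdef]; omega
        rw [this]
        rw [hx1]
      · rintro ⟨u, hu1, huγ, hueq⟩
        have hJu : J u = p := by
          apply hcastinj _ _ (hJub u hu1 huγ) hplt
          rw [hueq, hx1]
        have hIu : I u = p + 1 := by
          have := hIge u hu1 (by omega)
          simp only [hJdef] at hJu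
          omega
        have hu2 : 2 ≤ u := by
          by_contra h2
          have : u = 1 := by omega
          rw [this, hI1] at hIu
          omega
        have := hchange u hu2 huγ
        rw [hIu] at this
        simpa using this
  have hb : ∀ x, b x = if (x + 1) ∈ S then -1 else 1 := by
    intro x
    by_cases h : (x+1) ∈ S
    · rw [if_pos h]
      have hne := (hSchar x).2 h
      rcases hA x with h1 | h1 <;> rcases hA (x+1) with h2 | h2 <;>
        simp [hbdef, h1, h2] at hne ⊢
    · rw [if_neg h]
      have heq : A x = A (x+1) := by
        by_contra hne
        exact h ((hSchar x).1 hne)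
      rcases hA (x+1) with h2 | h2 <;> simp [hbdef, heq, h2]
  have htel : ∀ (x : ZMod n) (m : ℕ), A x * A (x + (m : ZMod n)) = B x m := by
    intro x m
    induction m with
    | zero => simpa [hBdef] using hAA x
    | succ s ih =>
      simp only [hBdef] at ih ⊢
      rw [Finset.prod_range_succ, ← ih]
      have hcast : ((s + 1 : ℕ) : ZMod n) = (s : ZMod n) + 1 := by push_cast; ring
      rw [hcast, hbdef]
      simp only []
      rw [← add_assoc]
      rcases hA (x + (s : ZMod n)) with h | h <;> rw [h] <;> ring
  have hshift : ∀ f : ZMod n → ℤ, ∑ x : ZMod n, f (x + 1) = ∑ x : ZMod n, f x := by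
    intro f
    exact Fintype.sum_equiv (Equiv.addRight (1 : ZMod n)) _ _ (fun x => rfl)
  have hC0 : C 0 = (n : ℤ) := by
    simp only [hCdef, hBdef, Finset.range_zero, Finset.prod_empty]
    rw [Finset.sum_const, Finset.card_univ, ZMod.card]
    simp
  have hC1 : C 1 = (n : ℤ) - 2 * γ := by
    have e1 : ∀ x : ZMod n, B x 1 = b x := by
      intro x
      simp [hBdef]
    have e2 : C 1 = ∑ x : ZMod n, (fun y => if y ∈ S then (-1 : ℤ) else 1) (x + 1) := by
      simp only [hCdef]
      refine Finset.sum_congr rfl fun x _ => ?_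
      rw [e1, hb x]
    rw [e2]
    refine Eq.trans (hshift (fun y => if y ∈ S then (-1 : ℤ) else 1)) ?_
    rw [Finset.sum_ite, Finset.sum_const, Finset.sum_const, Finset.filter_univ_mem]
    have hcards : (Finset.univ.filter (fun y : ZMod n => ¬ y ∈ S)).card = n - γ := by
      have := Finset.card_filter_add_card_filter_not
        (s := (Finset.univ : Finset (ZMod n))) (p := fun y => y ∈ S)
      rw [Finset.filter_univ_mem] at this
      have hcu : (Finset.univ : Finset (ZMod n)).card = n := by
        rw [Finset.card_univ, ZMod.card]
      omega
    rw [hcardS, hcards]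
    have hγn : γ ≤ n := by
      have := hJub γ hγ1 (le_refl γ)
      have := hcardS
      calc γ = S.card := hcardS.symm
        _ ≤ (Finset.univ : Finset (ZMod n)).card := Finset.card_le_univ S
        _ = n := by rw [Finset.card_univ, ZMod.card]
    simp only [nsmul_eq_mul]
    push_cast [hγn]
    ring
  have lem2 : ∀ (y : ZMod n) (s : ℕ), B y (s+1) = B y s * b (y + (s : ℕ)) := by
    intro y s
    simp only [hBdef]
    rw [Finset.prod_range_succ]
  have lem1 : ∀ (x : ZMod n) (s : ℕ), B x (s+1) = b x * B (x+1) s := by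
    intro x s
    simp only [hBdef]
    rw [Finset.prod_range_succ']
    rw [mul_comm]
    congr 1
    · simp
    · apply Finset.prod_congr rfl
      intro t _
      congr 1
      push_cast
      ring
  have hsec : ∀ m : ℕ, C (m + 2) + C m - 2 * C (m + 1) =
      ∑ x : ZMod n, (1 - b x) * (1 - b (x + ((m + 1 : ℕ) : ZMod n))) * B (x + 1) m := by
    intro m
    have e1 : C (m+2) = ∑ x : ZMod n, b x * (B (x+1) m * b (x+1+(m : ℕ))) := by
      simp only [hCdef]
      refine Finset.sum_congr rfl fun x _ => ?_
      rw [show m+2 = (m+1)+1 from rfl, lem1, lem2]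
    have e2 : C m = ∑ x : ZMod n, B (x+1) m := (hshift (fun y => B y m)).symm
    have e3a : C (m+1) = ∑ x : ZMod n, b x * B (x+1) m := by
      simp only [hCdef]
      exact Finset.sum_congr rfl fun x _ => lem1 x m
    have e3b : C (m+1) = ∑ x : ZMod n, B (x+1) m * b (x+1+(m : ℕ)) := by
      have tmp : C (m+1) = ∑ x : ZMod n, (fun y => B y m * b (y + (m : ℕ))) x := by
        simp only [hCdef]
        exact Finset.sum_congr rfl fun x _ => lem2 x m
      exact tmp.trans (hshift (fun y => B y m * b (y + (m : ℕ)))).symm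
    rw [show 2 * C (m+1) = (∑ x : ZMod n, b x * B (x+1) m)
        + ∑ x : ZMod n, B (x+1) m * b (x+1+(m : ℕ)) by
      rw [two_mul]; rw [← e3a, ← e3b]]
    rw [e1, e2, ← Finset.sum_add_distrib, ← Finset.sum_add_distrib, ← Finset.sum_sub_distrib]
    refine Finset.sum_congr rfl fun x _ => ?_
    have hx : x + ((m+1 : ℕ) : ZMod n) = x + 1 + (m : ℕ) := by push_cast; ring
    rw [hx]
    ring
  have hpconv : ∀ u, 1 ≤ u → u ≤ γ → ∀ t : ℕ, 1 ≤ t → t ≤ n - 1 →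
      ((J u : ZMod n) + (t : ZMod n)) ∈ S →
      ∃ v, 1 ≤ v ∧ v ≤ γ ∧ u ≠ v ∧ psum r γ u v = t := by
    intro u hu huγ t ht1 htn hmem
    rw [hSmem] at hmem
    obtain ⟨v, hv1, hvγ, hveq⟩ := hmem
    have hne : u ≠ v := by
      rintro rfl
      have hz : (t : ZMod n) = 0 := by
        have h2 : (J u : ZMod n) + (t : ZMod n) = (J u : ZMod n) + 0 := by
          rw [add_zero]; exact hveq.symm
        exact add_left_cancel h2
      have := (ZMod.natCast_eq_zero_iff t n).1 hz
      have := Nat.le_of_dvd (by omega) this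
      omega
    refine ⟨v, hv1, hvγ, hne, ?_⟩
    have e := hxv u v hu huγ hv1 hvγ hne
    rw [hveq] at e
    have hcc : ((psum r γ u v : ℕ) : ZMod n) = (t : ZMod n) := add_left_cancel e
    exact hcastinj _ _ (by have := hpsum_ub u v hu huγ hv1 hvγ hne; omega)
      (by omega) hcc
  have hcount : ∀ u v, 1 ≤ u → u ≤ γ → 1 ≤ v → v ≤ γ → u ≠ v →
      ((Finset.Icc 1 (psum r γ u v - 1)).filter
        (fun (t : ℕ) => ((J u : ZMod n) + ((t : ℕ) : ZMod n)) ∈ S)).card = plen γ u v - 1 := by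
    intro u v hu huγ hv hvγ huv
    have step1 : ((Finset.Icc 1 γ).filter
        (fun w => u ≠ w ∧ plen γ u w < plen γ u v)).card
        = ((Finset.Icc 1 (psum r γ u v - 1)).filter
          (fun (t : ℕ) => ((J u : ZMod n) + ((t : ℕ) : ZMod n)) ∈ S)).card := by
      apply Finset.card_bij (fun w _ => psum r γ u w)
      · intro w hw
        simp only [Finset.mem_filter, Finset.mem_Icc] at hw ⊢
        obtain ⟨⟨hw1, hwγ⟩, hwu, hwlt⟩ := hw
        have hlb := hpsum_lb u w hu huγ hw1 hwγ hwu
        have hlt : psum r γ u w < psum r γ u v :=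
          (hML u v w hu huγ hv hvγ hw1 hwγ huv hwu).2 hwlt
        refine ⟨⟨hlb, by omega⟩, ?_⟩
        rw [hxv u w hu huγ hw1 hwγ hwu, hSmem]
        exact ⟨w, hw1, hwγ, rfl⟩
      · intro w1 hw1 w2 hw2 heq
        simp only [Finset.mem_filter, Finset.mem_Icc] at hw1 hw2
        exact hpsuminj u w1 w2 hu huγ hw1.1.1 hw1.1.2 hw2.1.1 hw2.1.2 hw1.2.1 hw2.2.1 heq
      · intro t ht
        simp only [Finset.mem_filter, Finset.mem_Icc] at ht
        obtain ⟨⟨ht1, htub⟩, htS⟩ := ht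
        have hub2 := hpsum_ub u v hu huγ hv hvγ huv
        obtain ⟨w, hw1, hwγ, hwu, hweq⟩ := hpconv u hu huγ t ht1 (by omega) htS
        refine ⟨w, ?_, hweq⟩
        simp only [Finset.mem_filter, Finset.mem_Icc]
        refine ⟨⟨hw1, hwγ⟩, hwu, ?_⟩
        apply (hML u v w hu huγ hv hvγ hw1 hwγ huv hwu).1
        omega
    rw [← step1]
    have step2 : ((Finset.Icc 1 γ).filter
        (fun w => u ≠ w ∧ plen γ u w < plen γ u v)).card
        = (Finset.Icc 1 (plen γ u v - 1)).card := by
      apply Finset.card_bij (fun w _ => plen γ u w)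
      · intro w hw
        simp only [Finset.mem_filter, Finset.mem_Icc] at hw ⊢
        obtain ⟨⟨hw1, hwγ⟩, hwu, hwlt⟩ := hw
        have := hplen_pos u w hu huγ hw1 hwγ hwu
        omega
      · intro w1 hw1 w2 hw2 heq
        simp only [Finset.mem_filter, Finset.mem_Icc] at hw1 hw2
        exact hplen_inj u w1 w2 hu huγ hw1.1.1 hw1.1.2 hw2.1.1 hw2.1.2 hw1.2.1 hw2.2.1 heq
      · intro s hs
        simp only [Finset.mem_filter, Finset.mem_Icc] at hs
        have hpub := hplen_ub u v hu huγ hv hvγ huv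
        have hppos := hplen_pos u v hu huγ hv hvγ huv
        by_cases hc : u + s ≤ γ
        · refine ⟨u + s, ?_, ?_⟩
          · simp only [Finset.mem_filter, Finset.mem_Icc]
            have hp : plen γ u (u + s) = s := by unfold plen; rw [if_pos (by omega)]; omega
            exact ⟨⟨by omega, hc⟩, by omega, by rw [hp]; omega⟩
          · unfold plen; rw [if_pos (by omega)]; omega
        · refine ⟨u + s - γ, ?_, ?_⟩
          · simp only [Finset.mem_filter, Finset.mem_Icc]
            have hp : plen γ u (u + s - γ) = s := by
              unfold plen; rw [if_neg (by omega)]; omega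
            exact ⟨⟨by omega, by omega⟩, by omega, by rw [hp]; omega⟩
          · unfold plen; rw [if_neg (by omega)]; omega
    rw [step2, Nat.card_Icc]
    omega
  have hBval : ∀ u v, 1 ≤ u → u ≤ γ → 1 ≤ v → v ≤ γ → u ≠ v →
      B ((J u : ℕ) : ZMod n) (psum r γ u v - 1) = -(-1 : ℤ) ^ plen γ u v := by
    intro u v hu huγ hv hvγ huv
    have e0 : B ((J u : ℕ) : ZMod n) (psum r γ u v - 1)
        = ∏ t ∈ Finset.range (psum r γ u v - 1),
            (if ((J u : ZMod n) + (t : ZMod n) + 1) ∈ S then (-1 : ℤ) else 1) := by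
      simp only [hBdef]
      exact Finset.prod_congr rfl fun t _ => hb _
    rw [e0, Finset.prod_ite, Finset.prod_const, Finset.prod_const, one_pow, mul_one]
    have hcnt : ((Finset.range (psum r γ u v - 1)).filter
        (fun (t : ℕ) => ((J u : ZMod n) + ((t : ℕ) : ZMod n) + 1) ∈ S)).card
        = ((Finset.Icc 1 (psum r γ u v - 1)).filter
          (fun (t : ℕ) => ((J u : ZMod n) + ((t : ℕ) : ZMod n)) ∈ S)).card := by
      apply Finset.card_bij (fun t _ => t + 1)
      · intro t ht
        simp only [Finset.mem_filter, Finset.mem_range] at ht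
        simp only [Finset.mem_filter, Finset.mem_Icc]
        refine ⟨⟨by omega, by omega⟩, ?_⟩
        have : ((t + 1 : ℕ) : ZMod n) = (t : ZMod n) + 1 := by push_cast; ring
        rw [this, ← add_assoc]
        exact ht.2
      · intro t1 _ t2 _ h
        omega
      · intro t ht
        simp only [Finset.mem_filter, Finset.mem_Icc] at ht
        refine ⟨t - 1, ?_, by omega⟩
        simp only [Finset.mem_filter, Finset.mem_range]
        have h2 : t - 1 + 1 = t := by omega
        have h1 : ((t - 1 : ℕ) : ZMod n) + 1 = (t : ZMod n) := by
          calc ((t - 1 : ℕ) : ZMod n) + 1 = ((t - 1 + 1 : ℕ) : ZMod n) := by push_cast; ring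
            _ = (t : ZMod n) := by rw [h2]
        refine ⟨by omega, ?_⟩
        rw [add_assoc, h1]
        exact ht.2
    rw [hcnt, hcount u v hu huγ hv hvγ huv]
    have hp := hplen_pos u v hu huγ hv hvγ huv
    obtain ⟨q, hq⟩ : ∃ q, plen γ u v = q + 1 := ⟨plen γ u v - 1, by omega⟩
    rw [hq, Nat.add_sub_cancel, pow_succ]
    ring
  have hP : ∀ j, 1 ≤ j → j ≤ n - 1 →
      ∑ x : ZMod n, (1 - b x) * (1 - b (x + ((j : ℕ) : ZMod n))) * B (x + 1) (j - 1)
        = -4 * R j := by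
    intro j hj1 hjn
    have step1 : ∀ x : ZMod n,
        (1 - b x) * (1 - b (x + ((j : ℕ) : ZMod n))) * B (x + 1) (j - 1)
        = (fun y => (if y ∈ S then (2:ℤ) else 0) *
            (if (y + ((j:ℕ):ZMod n)) ∈ S then (2:ℤ) else 0) * B y (j-1)) (x + 1) := by
      intro x
      simp only []
      rw [hb x, hb (x + ((j:ℕ) : ZMod n))]
      have hre : x + ((j:ℕ):ZMod n) + 1 = x + 1 + ((j:ℕ):ZMod n) := by ring
      rw [hre]
      by_cases h1 : (x+1) ∈ S <;> by_cases h2 : (x + 1 + ((j:ℕ):ZMod n)) ∈ S <;>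
        simp [h1, h2] <;> ring
    rw [Finset.sum_congr rfl (fun x _ => step1 x)]
    refine Eq.trans (hshift (fun y => (if y ∈ S then (2:ℤ) else 0) *
        (if (y + ((j:ℕ):ZMod n)) ∈ S then (2:ℤ) else 0) * B y (j-1))) ?_
    have step2 : ∀ y : ZMod n, (if y ∈ S then (2:ℤ) else 0) *
        (if (y + ((j:ℕ):ZMod n)) ∈ S then (2:ℤ) else 0) * B y (j-1)
        = if (y ∈ S ∧ (y + ((j:ℕ):ZMod n)) ∈ S) then 4 * B y (j-1) else 0 := by
      intro y
      by_cases h1 : y ∈ S <;> by_cases h2 : (y + ((j:ℕ):ZMod n)) ∈ S <;>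
        simp [h1, h2] <;> ring
    rw [Finset.sum_congr rfl (fun y _ => step2 y)]
    rw [← Finset.sum_filter]
    rw [hRdef]
    unfold runVecPer
    rw [Finset.mul_sum]
    symm
    apply Finset.sum_bij (i := fun (p : ℕ × ℕ) _ => ((J p.1 : ℕ) : ZMod n))
    · intro p hp
      simp only [Finset.mem_filter, Finset.mem_product, Finset.mem_Icc] at hp
      obtain ⟨⟨⟨h11, h12⟩, h21, h22⟩, hne, hps⟩ := hp
      simp only [Finset.mem_filter, Finset.mem_univ, true_and]
      constructor
      · rw [hSmem]; exact ⟨p.1, h11, h12, rfl⟩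
      · rw [← hps, hxv p.1 p.2 h11 h12 h21 h22 hne, hSmem]
        exact ⟨p.2, h21, h22, rfl⟩
    · intro p hp q hq heq
      simp only [Finset.mem_filter, Finset.mem_product, Finset.mem_Icc] at hp hq
      obtain ⟨⟨⟨hp11, hp12⟩, hp21, hp22⟩, hpne, hpps⟩ := hp
      obtain ⟨⟨⟨hq11, hq12⟩, hq21, hq22⟩, hqne, hqps⟩ := hq
      have h1 : p.1 = q.1 := hJcastinj _ _ hp11 hp12 hq11 hq12 heq
      have e1 := hxv p.1 p.2 hp11 hp12 hp21 hp22 hpne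
      have e2 := hxv q.1 q.2 hq11 hq12 hq21 hq22 hqne
      rw [hpps] at e1
      rw [hqps] at e2
      rw [heq] at e1
      have h2 : p.2 = q.2 := hJcastinj _ _ hp21 hp22 hq21 hq22 (e1.symm.trans e2)
      exact Prod.ext h1 h2
    · intro y hy
      simp only [Finset.mem_filter, Finset.mem_univ, true_and] at hy
      obtain ⟨hy1, hy2⟩ := hy
      rw [hSmem] at hy1
      obtain ⟨u, hu1, huγ, hueq⟩ := hy1
      rw [← hueq] at hy2
      obtain ⟨v, hv1, hvγ, hvne, hvps⟩ := hpconv u hu1 huγ j hj1 hjn hy2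
      refine ⟨(u, v), ?_, hueq⟩
      simp only [Finset.mem_filter, Finset.mem_product, Finset.mem_Icc]
      exact ⟨⟨⟨hu1, huγ⟩, hv1, hvγ⟩, hvne, hvps⟩
    · intro p hp
      simp only [Finset.mem_filter, Finset.mem_product, Finset.mem_Icc] at hp
      obtain ⟨⟨⟨h11, h12⟩, h21, h22⟩, hne, hps⟩ := hp
      have hBv := hBval p.1 p.2 h11 h12 h21 h22 hne
      rw [hps] at hBv
      rw [hBv]
      ring
  have hrec : ∀ m, m + 2 ≤ n → C (m + 2) = 2 * C (m + 1) - C m - 4 * R (m + 1) := by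
    intro m hm
    have h1 := hsec m
    have h2 := hP (m+1) (by omega) (by omega)
    simp only [Nat.add_sub_cancel] at h2
    rw [h2] at h1
    linarith
  set F : ℕ → ℤ := fun m => (n : ℤ) - 2 * (γ : ℤ) * m
      - 4 * ∑ j ∈ Finset.Icc 1 (m - 1), ((m : ℤ) - j) * R j with hFdef
  have halg : ∀ m : ℕ, F (m + 2) = 2 * F (m + 1) - F m - 4 * R (m + 1) := by
    intro m
    rcases m with _ | m'
    · simp only [hFdef]
      norm_num [Finset.Icc_self, Finset.sum_singleton]
      ring
    · simp only [hFdef]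
      rw [show m' + 1 + 2 - 1 = m' + 2 from by omega,
          show m' + 1 + 1 - 1 = m' + 1 from by omega,
          show m' + 1 - 1 = m' from by omega]
      have e2 : ∑ j ∈ Finset.Icc 1 (m'+2), (((m'+1+2 : ℕ) : ℤ) - (j : ℤ)) * R j
          = (∑ j ∈ Finset.Icc 1 (m'+1), (((m'+1+2 : ℕ) : ℤ) - (j : ℤ)) * R j) + R (m'+2) := by
        rw [Finset.sum_Icc_succ_top (by omega)]
        have hc : (((m'+1+2 : ℕ) : ℤ) - ((m'+2 : ℕ) : ℤ)) = 1 := by push_cast; ring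
        rw [hc, one_mul]
      have e0 : ∑ j ∈ Finset.Icc 1 m', (((m'+1 : ℕ) : ℤ) - (j : ℤ)) * R j
          = ∑ j ∈ Finset.Icc 1 (m'+1), (((m'+1 : ℕ) : ℤ) - (j : ℤ)) * R j := by
        rw [Finset.sum_Icc_succ_top (by omega)]
        have hc : (((m'+1 : ℕ) : ℤ) - ((m'+1 : ℕ) : ℤ)) = 0 := by ring
        rw [hc, zero_mul, add_zero]
      have comb : ∑ j ∈ Finset.Icc 1 (m'+1), (((m'+1+2 : ℕ) : ℤ) - (j : ℤ)) * R j
          + ∑ j ∈ Finset.Icc 1 (m'+1), (((m'+1 : ℕ) : ℤ) - (j : ℤ)) * R j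
          = 2 * ∑ j ∈ Finset.Icc 1 (m'+1), (((m'+1+1 : ℕ) : ℤ) - (j : ℤ)) * R j := by
        rw [Finset.mul_sum, ← Finset.sum_add_distrib]
        refine Finset.sum_congr rfl fun j _ => ?_
        push_cast
        ring
      rw [e2, e0]
      linear_combination (norm := (push_cast; ring1)) (-4 : ℤ) * comb
  have main : ∀ m, m ≤ n → C m = F m := by
    intro m
    induction m using Nat.strong_induction_on with
    | _ m ih =>
      intro hm
      match m with
      | 0 => simpa [hFdef] using hC0
      | 1 => simpa [hFdef] using hC1
      | (s + 2) =>
        rw [hrec s hm, halg s, ih (s+1) (by omega) (by omega), ih s (by omega) (by omega)]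
  have hCk : perCorr a n k = C k := by
    rw [hper k]
    exact Finset.sum_congr rfl fun x _ => htel x k
  rw [hCk, main k hk]
end
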